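/- Let V be the 10×10 integer matrix [[0,1,0,0,0,0,0,0,0,-1],[0,-1,0,0,0,0,0,0,0,0],[0,1,0,0,0,0,0,0,0,0],[0,0,1,1,1,0,0,0,0,0],[0,0,0,0,0,1,0,0,0,-1],[0,0,0,0,0,-1,0,0,0,0],[0,0,0,0,0,1,0,0,0,0],[0,0,0,0,0,0,1,2,1,0],[0,0,0,0,0,0,1,1,0,1],[0,0,1,0,0,0,1,0,0,2]], set Γ = -V·(Vᵗ - V)⁻¹ (an integer matrix), and let A = Γ³ - (Γ - I)³. Then the cokernel of A, viewed as a map ℤ¹⁰ → ℤ¹⁰, is isomorphic as an abelian group to (ℤ/7ℤ)⁴. -/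
import Mathlib

open Matrix

def Wi : Matrix (Fin 10) (Fin 10) ℤ :=
  !![0, 1, 0, 1, 0, 1, 0, 1, 0, 0;
     -1, 0, 0, 0, 0, 0, 0, 1, -1, 0;
     0, 0, 0, -1, 0, -1, 0, -1, 0, 0;
     -1, 0, 1, 0, 0, 0, 0, 0, 0, 0;
     0, 0, 0, 0, 0, 1, 0, 1, 0, 0;
     -1, 0, 1, 0, -1, 0, 0, 1, -1, 0;
     0, 0, 0, 0, 0, 0, 0, -1, 0, 0;
     -1, -1, 1, 0, -1, -1, 1, 0, 0, -1;
     0, 1, 0, 0, 0, 1, 0, 0, 0, 1;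
     0, 0, 0, 0, 0, 0, 0, 1, -1, 0]
def Ge : Matrix (Fin 10) (Fin 10) ℤ :=
  !![1, 0, 0, 0, 0, 0, 0, 0, 0, 0;
     -1, 0, 0, 0, 0, 0, 0, 1, -1, 0;
     1, 0, 0, 0, 0, 0, 0, -1, 1, 0;
     1, 0, -1, 1, 0, 0, 0, 0, 0, 0;
     1, 0, -1, 0, 1, 0, 0, 0, 0, 0;
     -1, 0, 1, 0, -1, 0, 0, 1, -1, 0;
     1, 0, -1, 0, 1, 0, 0, -1, 1, 0;
     2, 1, -2, 0, 2, 1, -2, 1, 0, 1;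
     1, 1, -1, 0, 1, 1, -1, 0, 1, 1;
     0, 0, 0, 1, 0, 1, 0, 0, 2, 0]
def Ae : Matrix (Fin 10) (Fin 10) ℤ :=
  !![1, 0, 0, 0, 0, 0, 0, 0, 0, 0;
     3, 1, -3, 0, 3, 0, -3, 0, 0, 0;
     -3, 0, 4, 0, -3, 0, 3, 0, 0, 0;
     0, 0, 0, 1, 0, 0, 0, 3, -3, 0;
     0, 0, 0, 0, 1, 0, 0, 3, -3, 0;
     3, 0, -3, 0, 3, 1, -3, -3, 3, 0;
     -3, 0, 3, 0, -3, 0, 4, 3, -3, 0;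
     -6, 0, 3, 3, -3, 3, 0, 19, -12, 0;
     -6, 0, 3, 3, -3, 3, 0, 12, -5, 0;
     6, 6, -6, 0, 3, 3, -6, 3, -3, 7]
def Pm : Matrix (Fin 10) (Fin 10) ℤ :=
  !![1, 0, 0, 0, 0, 0, 0, 0, 0, 0;
     -3, 1, 0, 0, 0, 0, 0, 0, 0, 0;
     0, 0, 0, 1, 0, 0, 0, 0, 0, 0;
     0, 0, 0, 0, 1, 0, 0, 0, 0, 0;
     -3, 0, 0, 0, -3, 1, 0, 0, 0, 0;
     3, 0, 1, 0, 3, 0, 0, 0, 0, 0;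
     6, 0, 1, 0, 6, 0, 1, 0, 0, 0;
     3, -6, -3, 0, 6, -3, -3, 0, 0, 1;
     6, 0, -3, -3, 3, -3, 0, 0, 1, 0;
     -6, 0, 3, 3, -3, 3, 0, 1, -2, 0]
def Qm : Matrix (Fin 10) (Fin 10) ℤ :=
  !![1, 0, 0, 0, 0, 0, 0, 0, 0, 0;
     0, 1, 0, -3, 0, 0, 3, 0, 0, 0;
     0, 0, 0, 0, 0, 1, -3, 0, 0, 0;
     0, 0, 1, 0, 0, 0, 0, 0, -3, -3;
     0, 0, 0, 1, 0, 0, 0, 0, -3, -3;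
     0, 0, 0, 0, 1, 0, 3, 0, 3, 3;
     0, 0, 0, 0, 0, -1, 4, 0, -3, -3;
     0, 0, 0, 0, 0, 0, 0, 0, -1, -2;
     0, 0, 0, 0, 0, 0, 0, 0, -2, -3;
     0, 0, 0, 0, 0, 0, 0, 1, -3, -3]
def Pinv : Matrix (Fin 10) (Fin 10) ℤ :=
  !![1, 0, 0, 0, 0, 0, 0, 0, 0, 0;
     3, 1, 0, 0, 0, 0, 0, 0, 0, 0;
     -3, 0, 0, -3, 0, 1, 0, 0, 0, 0;
     0, 0, 1, 0, 0, 0, 0, 0, 0, 0;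
     0, 0, 0, 1, 0, 0, 0, 0, 0, 0;
     3, 0, 0, 3, 1, 0, 0, 0, 0, 0;
     -3, 0, 0, -3, 0, -1, 1, 0, 0, 0;
     -6, 0, 3, -3, 3, 3, 0, 0, 2, 1;
     -6, 0, 3, -3, 3, 3, 0, 0, 1, 0;
     6, 6, 0, -15, 3, 0, 3, 1, 0, 0]
def Qinv : Matrix (Fin 10) (Fin 10) ℤ :=
  !![1, 0, 0, 0, 0, 0, 0, 0, 0, 0;
     0, 1, -3, 0, 3, 0, -3, 0, 0, 0;
     0, 0, 0, 1, 0, 0, 0, 3, -3, 0;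
     0, 0, 0, 0, 1, 0, 0, 3, -3, 0;
     0, 0, -3, 0, 0, 1, -3, -12, 12, 0;
     0, 0, 4, 0, 0, 0, 3, 9, -9, 0;
     0, 0, 1, 0, 0, 0, 1, 3, -3, 0;
     0, 0, 0, 0, 0, 0, 0, 3, -3, 1;
     0, 0, 0, 0, 0, 0, 0, 3, -2, 0;
     0, 0, 0, 0, 0, 0, 0, -2, 1, 0]

def dvec : Fin 10 → ℤ := ![1,1,1,1,1,1,7,7,7,7]

def phi : (Fin 10 → ℤ) →ₗ[ℤ] (Fin 4 → ZMod 7) where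
  toFun x := fun i => ((x ⟨i.1 + 6, by omega⟩ : ℤ) : ZMod 7)
  map_add' x y := by funext i; simp
  map_smul' c x := by
    funext i
    simp [zsmul_eq_mul]

lemma phi_surj : Function.Surjective phi := by
  intro y
  refine ⟨fun j => if h : 6 ≤ (j : ℕ) then ((y ⟨(j : ℕ) - 6, by omega⟩).val : ℤ) else 0, ?_⟩
  funext i
  have hi : (6 : ℕ) ≤ i.1 + 6 := by omega
  simp only [phi, LinearMap.coe_mk, AddHom.coe_mk, hi, dif_pos]
  have : i.1 + 6 - 6 = i.1 := by omega
  simp only [this, Int.cast_natCast]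
  rw [ZMod.natCast_val, ZMod.cast_id]

lemma ker_phi : LinearMap.ker phi = LinearMap.range (Matrix.toLin' (diagonal dvec)) := by
  apply le_antisymm
  · intro x hx
    have h : ∀ i : Fin 4, (7 : ℤ) ∣ x ⟨i.1 + 6, by omega⟩ := by
      intro i
      have := congrFun (LinearMap.mem_ker.mp hx) i
      simpa [phi, ZMod.intCast_zmod_eq_zero_iff_dvd] using this
    refine ⟨fun j => if (j : ℕ) < 6 then x j else x j / 7, ?_⟩
    funext j
    rw [Matrix.toLin'_apply, Matrix.mulVec_diagonal]
    fin_cases j <;>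
      simp only [dvec] <;>
      norm_num [Matrix.cons_val_zero, Matrix.cons_val_one]
    · exact Int.mul_ediv_cancel' (h 0)
    · exact Int.mul_ediv_cancel' (h 1)
    · exact Int.mul_ediv_cancel' (h 2)
    · exact Int.mul_ediv_cancel' (h 3)
  · rintro y ⟨x, rfl⟩
    apply LinearMap.mem_ker.mpr
    funext i
    rw [Matrix.toLin'_apply]
    show ((Matrix.mulVec (diagonal dvec) x ⟨i.1 + 6, by omega⟩ : ℤ) : ZMod 7) = 0
    rw [Matrix.mulVec_diagonal]
    have hd : dvec ⟨i.1 + 6, by omega⟩ = 7 := by fin_cases i <;> rfl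
    rw [hd, Int.cast_mul, show ((7 : ℤ) : ZMod 7) = 0 from by decide, zero_mul]

set_option maxRecDepth 4000 in
/-- For the Seifert matrix V of K = D₄(2), with Γ = -V(Vᵗ-V)⁻¹ and
A = Γ³ - (Γ-I)³, the cokernel of A : ℤ¹⁰ → ℤ¹⁰ is isomorphic to (ℤ/7)⁴. -/
theorem homology_threefold_cover_K :
    let V : Matrix (Fin 10) (Fin 10) ℤ :=
      !![0,1,0,0,0,0,0,0,0,-1;
         0,-1,0,0,0,0,0,0,0,0;
         0,1,0,0,0,0,0,0,0,0;
         0,0,1,1,1,0,0,0,0,0;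
         0,0,0,0,0,1,0,0,0,-1;
         0,0,0,0,0,-1,0,0,0,0;
         0,0,0,0,0,1,0,0,0,0;
         0,0,0,0,0,0,1,2,1,0;
         0,0,0,0,0,0,1,1,0,1;
         0,0,1,0,0,0,1,0,0,2]
    let Γ : Matrix (Fin 10) (Fin 10) ℤ := -V * (Vᵀ - V)⁻¹
    let A : Matrix (Fin 10) (Fin 10) ℤ := Γ ^ 3 - (Γ - 1) ^ 3
    Nonempty (((Fin 10 → ℤ) ⧸ LinearMap.range (Matrix.toLin' A)) ≃+
      (Fin 4 → ZMod 7)) := by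
  intro V Γ A
  have hWinv : (Vᵀ - V)⁻¹ = Wi := Matrix.inv_eq_right_inv (by decide)
  have hΓ : Γ = Ge := by
    show -V * (Vᵀ - V)⁻¹ = Ge
    rw [hWinv]; decide
  have hA : A = Ae := by
    show Γ ^ 3 - (Γ - 1) ^ 3 = Ae
    rw [hΓ]; decide
  have hPAQ : Pm * Ae * Qm = diagonal dvec := by decide
  have hPP : Pm * Pinv = 1 := by decide
  have hPP' : Pinv * Pm = 1 := by decide
  have hQQ : Qm * Qinv = 1 := by decide
  -- the linear equivalence coming from the unimodular matrix P
  let eP : (Fin 10 → ℤ) ≃ₗ[ℤ] (Fin 10 → ℤ) :=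
    LinearEquiv.ofLinear (Matrix.toLin' Pm) (Matrix.toLin' Pinv)
      (by rw [← Matrix.toLin'_mul, hPP, Matrix.toLin'_one])
      (by rw [← Matrix.toLin'_mul, hPP', Matrix.toLin'_one])
  have hQtop : LinearMap.range (Matrix.toLin' Qm) = ⊤ := by
    rw [LinearMap.range_eq_top]
    intro y
    refine ⟨Matrix.toLin' Qinv y, ?_⟩
    rw [← LinearMap.comp_apply, ← Matrix.toLin'_mul, hQQ, Matrix.toLin'_one,
      LinearMap.id_apply]
  have hmap : (LinearMap.range (Matrix.toLin' A)).map (eP : (Fin 10 → ℤ) →ₗ[ℤ] (Fin 10 → ℤ))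
      = LinearMap.range (Matrix.toLin' (diagonal dvec)) := by
    have h1 : (eP : (Fin 10 → ℤ) →ₗ[ℤ] (Fin 10 → ℤ)) = Matrix.toLin' Pm := rfl
    rw [h1, ← LinearMap.range_comp, ← Matrix.toLin'_mul,
      ← LinearMap.range_comp_of_range_eq_top (Matrix.toLin' (Pm * A)) hQtop,
      ← Matrix.toLin'_mul, hA, hPAQ]
  exact ⟨((Submodule.Quotient.equiv _ _ eP hmap).trans
    ((Submodule.quotEquivOfEq _ _ ker_phi.symm).trans
      (phi.quotKerEquivOfSurjective phi_surj))).toAddEquiv⟩
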